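/- The normalized median Genocchi number h_{n+1} equals the number of pairs of collections of non-negative integers (r_{i,j})_{1≤i≤j≤n}, (m_{i,j})_{1≤i≤j≤n} satisfying, for all k = 1,...,n: \sum_{k'=k}^{n} r_{k,k'} ≤ 1, \sum_{k'=1}^{k} m_{k',k} ≤ 1, and \sum_{i≤k≤j} r_{i,j} = \sum_{i≤k≤j} m_{i,j}. -/

import Mathlib

/-- The normalized median Genocchi number `h m`. -/
noncomputable def genocchi (m : ℕ) : ℕ :=
  Nat.card {S : Fin (m - 1) → Finset (Fin m) //
    (∀ i : Fin (m - 1), (S i).card = (i : ℕ) + 1) ∧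
    (∀ i : Fin (m - 1), ∀ h : (i : ℕ) + 1 < m - 1,
      S i ⊆ S ⟨(i : ℕ) + 1, h⟩ ∪ {⟨(i : ℕ) + 1, by omega⟩})}

namespace GenocchiAux

variable {n : ℕ}

/-- row condition for the derived `r` matrix -/
def rcond (S : Fin n → Finset (Fin (n+1))) (i j : Fin n) : Prop :=
  i ≤ j ∧ (∀ k : Fin n, i ≤ k → k ≤ j → i.castSucc ∉ S k) ∧
    ∀ k : Fin n, (k : ℕ) = (j : ℕ) + 1 → i.castSucc ∈ S k

/-- column condition for the derived `m` matrix -/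
def mcond (S : Fin n → Finset (Fin (n+1))) (i j : Fin n) : Prop :=
  i ≤ j ∧ (∀ k : Fin n, i ≤ k → k ≤ j → j.succ ∈ S k) ∧
    ∀ k : Fin n, (k : ℕ) + 1 = (i : ℕ) → j.succ ∉ S k

instance (S : Fin n → Finset (Fin (n+1))) (i j : Fin n) : Decidable (rcond S i j) := by
  unfold rcond; infer_instance

instance (S : Fin n → Finset (Fin (n+1))) (i j : Fin n) : Decidable (mcond S i j) := by
  unfold mcond; infer_instance

def rmat (S : Fin n → Finset (Fin (n+1))) (i j : Fin n) : ℕ :=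
  if rcond S i j then 1 else 0

def mmat (S : Fin n → Finset (Fin (n+1))) (i j : Fin n) : ℕ :=
  if mcond S i j then 1 else 0

/-- inverse construction -/
def toS (r m : Fin n → Fin n → ℕ) (k : Fin n) : Finset (Fin (n+1)) :=
  Finset.univ.filter fun e =>
    ((e : ℕ) ≤ (k : ℕ) ∧ ∀ i j : Fin n, (i : ℕ) = (e : ℕ) → k ≤ j → r i j = 0) ∨
    ((k : ℕ) < (e : ℕ) ∧ ∃ i j : Fin n, (j : ℕ) + 1 = (e : ℕ) ∧ i ≤ k ∧ m i j ≠ 0)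

section StructS

variable {S : Fin n → Finset (Fin (n+1))}

/-- persistence of membership -/
lemma persist
    (h2 : ∀ i : Fin n, ∀ h : (i : ℕ) + 1 < n,
      S i ⊆ S ⟨(i : ℕ) + 1, h⟩ ∪ {⟨(i : ℕ) + 1, by omega⟩})
    (e : Fin (n+1)) (k k' : Fin n) (hkk : k ≤ k')
    (ht : ∀ t : ℕ, (k : ℕ) ≤ t → t < (k' : ℕ) → (e : ℕ) ≠ t + 1)
    (he : e ∈ S k) : e ∈ S k' := by
  obtain ⟨d, hd⟩ : ∃ d, (k' : ℕ) = (k : ℕ) + d := ⟨k' - k, by omega⟩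
  induction d generalizing k' with
  | zero =>
    have : k = k' := Fin.ext (by omega)
    rwa [← this]
  | succ d ih =>
    have hdn : (k : ℕ) + d < n := by omega
    set k'' : Fin n := ⟨(k : ℕ) + d, hdn⟩ with hk''
    have hv : (k'' : ℕ) = (k : ℕ) + d := rfl
    have hmem : e ∈ S k'' := by
      refine ih k'' ?_ (fun t h1 h3 => ht t h1 (by omega)) hv.symm
      exact Fin.le_def.mpr (by omega)
    have hlt : (k'' : ℕ) + 1 < n := by
      have := k'.isLt; omega
    have hsub := h2 k'' hlt hmem
    rcases Finset.mem_union.mp hsub with h | h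
    · have : (⟨(k'' : ℕ) + 1, hlt⟩ : Fin n) = k' := Fin.ext (by simp [hk'']; omega)
      rwa [this] at h
    · exfalso
      have heq := Finset.mem_singleton.mp h
      have : (e : ℕ) = (k : ℕ) + d + 1 := by
        have := congrArg Fin.val heq; simpa [hk''] using this
      exact ht ((k : ℕ) + d) (by omega) (by omega) this

lemma persist_ge
    (h2 : ∀ i : Fin n, ∀ h : (i : ℕ) + 1 < n,
      S i ⊆ S ⟨(i : ℕ) + 1, h⟩ ∪ {⟨(i : ℕ) + 1, by omega⟩})
    (e : Fin (n+1)) (k k' : Fin n) (he0 : (e : ℕ) ≤ (k : ℕ)) (hkk : k ≤ k')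
    (he : e ∈ S k) : e ∈ S k' :=
  persist h2 e k k' hkk (fun t h1 _ => by omega) he

lemma persist_lt
    (h2 : ∀ i : Fin n, ∀ h : (i : ℕ) + 1 < n,
      S i ⊆ S ⟨(i : ℕ) + 1, h⟩ ∪ {⟨(i : ℕ) + 1, by omega⟩})
    (e : Fin (n+1)) (k k' : Fin n) (hkk : k ≤ k') (he0 : (k' : ℕ) < (e : ℕ))
    (he : e ∈ S k) : e ∈ S k' :=
  persist h2 e k k' hkk (fun t _ h2' => by omega) he

lemma rcond_unique {i j j' : Fin n} (h : rcond S i j) (h' : rcond S i j') : j = j' := by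
  rcases lt_trichotomy j j' with hlt | heq | hlt
  · exfalso
    have hb : (j : ℕ) + 1 < n := by have := j'.isLt; have := Fin.lt_def.mp hlt; omega
    have hmem := h.2.2 ⟨(j : ℕ) + 1, hb⟩ rfl
    exact h'.2.1 ⟨(j : ℕ) + 1, hb⟩ (Fin.le_def.mpr (by have := Fin.le_def.mp h.1; simp; omega))
      (Fin.le_def.mpr (by have := Fin.lt_def.mp hlt; simp; omega)) hmem
  · exact heq
  · exfalso
    have hb : (j' : ℕ) + 1 < n := by have := j.isLt; have := Fin.lt_def.mp hlt; omega
    have hmem := h'.2.2 ⟨(j' : ℕ) + 1, hb⟩ rfl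
    exact h.2.1 ⟨(j' : ℕ) + 1, hb⟩ (Fin.le_def.mpr (by have := Fin.le_def.mp h'.1; simp; omega))
      (Fin.le_def.mpr (by have := Fin.lt_def.mp hlt; simp; omega)) hmem

lemma mcond_unique {i i' j : Fin n} (h : mcond S i j) (h' : mcond S i' j) : i = i' := by
  rcases lt_trichotomy i i' with hlt | heq | hlt
  · exfalso
    have hb : (i' : ℕ) - 1 < n := by have := i'.isLt; omega
    have hi' : 0 < (i' : ℕ) := by have := Fin.lt_def.mp hlt; omega
    have hnmem := h'.2.2 ⟨(i' : ℕ) - 1, hb⟩ (by simp; omega)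
    exact hnmem (h.2.1 ⟨(i' : ℕ) - 1, hb⟩
      (Fin.le_def.mpr (by have := Fin.lt_def.mp hlt; simp; omega))
      (Fin.le_def.mpr (by have := Fin.le_def.mp h'.1; simp; omega)) )
  · exact heq
  · exfalso
    have hb : (i : ℕ) - 1 < n := by have := i.isLt; omega
    have hi' : 0 < (i : ℕ) := by have := Fin.lt_def.mp hlt; omega
    have hnmem := h.2.2 ⟨(i : ℕ) - 1, hb⟩ (by simp; omega)
    exact hnmem (h'.2.1 ⟨(i : ℕ) - 1, hb⟩
      (Fin.le_def.mpr (by have := Fin.lt_def.mp hlt; simp; omega))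
      (Fin.le_def.mpr (by have := Fin.le_def.mp h.1; simp; omega)) )

lemma rcond_exists
    (h2 : ∀ i : Fin n, ∀ h : (i : ℕ) + 1 < n,
      S i ⊆ S ⟨(i : ℕ) + 1, h⟩ ∪ {⟨(i : ℕ) + 1, by omega⟩})
    {i k : Fin n} (hik : i ≤ k) (hni : i.castSucc ∉ S k) :
    ∃ j, k ≤ j ∧ rcond S i j := by
  classical
  set T : Finset (Fin n) := Finset.univ.filter fun j => i ≤ j ∧ i.castSucc ∉ S j with hT
  have hkT : k ∈ T := by simp [hT, hik, hni]
  have hne : T.Nonempty := ⟨k, hkT⟩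
  set j := T.max' hne with hj
  have hjT : j ∈ T := T.max'_mem hne
  have hij : i ≤ j := (Finset.mem_filter.mp hjT).2.1
  have hjn : i.castSucc ∉ S j := (Finset.mem_filter.mp hjT).2.2
  refine ⟨j, T.le_max' k hkT, hij, ?_, ?_⟩
  · intro k' hik' hk'j hmem
    exact hjn (persist_ge h2 i.castSucc k' j (by simp [Fin.le_def.mp hik']) hk'j hmem)
  · intro k' hk'
    by_contra hnm
    have : k' ∈ T := by
      simp only [hT, Finset.mem_filter, Finset.mem_univ, true_and]
      exact ⟨Fin.le_def.mpr (by have := Fin.le_def.mp hij; omega), hnm⟩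
    have := T.le_max' k' this
    rw [← hj] at this
    have := Fin.le_def.mp this
    omega

lemma mcond_exists
    (h2 : ∀ i : Fin n, ∀ h : (i : ℕ) + 1 < n,
      S i ⊆ S ⟨(i : ℕ) + 1, h⟩ ∪ {⟨(i : ℕ) + 1, by omega⟩})
    {j k : Fin n} (hkj : k ≤ j) (hin : j.succ ∈ S k) :
    ∃ i, i ≤ k ∧ mcond S i j := by
  classical
  set T : Finset (Fin n) := Finset.univ.filter fun i => i ≤ j ∧ j.succ ∈ S i with hT
  have hkT : k ∈ T := by simp [hT, hkj, hin]
  have hne : T.Nonempty := ⟨k, hkT⟩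
  set i := T.min' hne with hi
  have hiT : i ∈ T := T.min'_mem hne
  have hij : i ≤ j := (Finset.mem_filter.mp hiT).2.1
  have hjm : j.succ ∈ S i := (Finset.mem_filter.mp hiT).2.2
  refine ⟨i, T.min'_le k hkT, hij, ?_, ?_⟩
  · intro k' hik' hk'j
    exact persist_lt h2 j.succ i k' hik' (by simp [Fin.le_def.mp hk'j]) hjm
  · intro k' hk'
    intro hnm
    have : k' ∈ T := by
      simp only [hT, Finset.mem_filter, Finset.mem_univ, true_and]
      exact ⟨Fin.le_def.mpr (by have := Fin.le_def.mp hij; omega), hnm⟩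
    have := T.min'_le k' this
    rw [← hi] at this
    have := Fin.le_def.mp this
    omega

lemma r_iff
    (h2 : ∀ i : Fin n, ∀ h : (i : ℕ) + 1 < n,
      S i ⊆ S ⟨(i : ℕ) + 1, h⟩ ∪ {⟨(i : ℕ) + 1, by omega⟩})
    {i k : Fin n} (hik : i ≤ k) :
    (∃ j, k ≤ j ∧ rcond S i j) ↔ i.castSucc ∉ S k := by
  constructor
  · rintro ⟨j, hkj, hc⟩
    exact hc.2.1 k hik hkj
  · exact rcond_exists h2 hik

lemma m_iff
    (h2 : ∀ i : Fin n, ∀ h : (i : ℕ) + 1 < n,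
      S i ⊆ S ⟨(i : ℕ) + 1, h⟩ ∪ {⟨(i : ℕ) + 1, by omega⟩})
    {j k : Fin n} (hkj : k ≤ j) :
    (∃ i, i ≤ k ∧ mcond S i j) ↔ j.succ ∈ S k := by
  constructor
  · rintro ⟨i, hik, hc⟩
    exact hc.2.1 k hik hkj
  · exact mcond_exists h2 hkj

end StructS

section Generic

lemma row_sum_eq (f : Fin n → Fin n → ℕ) (i k : Fin n) (h1 : ∑ j, f i j ≤ 1) :
    (∑ j, if i ≤ k ∧ k ≤ j then f i j else 0)
      = if i ≤ k ∧ ∃ j, k ≤ j ∧ f i j ≠ 0 then 1 else 0 := by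
  classical
  by_cases hik : i ≤ k
  · have hsum : (∑ j, if i ≤ k ∧ k ≤ j then f i j else 0)
        = ∑ j ∈ Finset.univ.filter (fun j => k ≤ j), f i j := by
      rw [Finset.sum_filter]
      exact Finset.sum_congr rfl fun j _ => by simp [hik]
    rw [hsum]
    by_cases hex : ∃ j, k ≤ j ∧ f i j ≠ 0
    · rw [if_pos ⟨hik, hex⟩]
      obtain ⟨j0, hkj0, hf0⟩ := hex
      have hle : (∑ j ∈ Finset.univ.filter (fun j => k ≤ j), f i j) ≤ 1 :=
        le_trans (Finset.sum_le_sum_of_subset (Finset.filter_subset _ _)) h1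
      have hge : 1 ≤ ∑ j ∈ Finset.univ.filter (fun j => k ≤ j), f i j := by
        have h3 : f i j0 ≤ ∑ j ∈ Finset.univ.filter (fun j => k ≤ j), f i j := by
          simpa using Finset.single_le_sum (f := fun j => f i j)
            (fun j _ => Nat.zero_le _)
            (by simp [hkj0] : j0 ∈ Finset.univ.filter (fun j => k ≤ j))
        omega
      omega
    · rw [if_neg (fun h => hex h.2)]
      push_neg at hex
      exact Finset.sum_eq_zero fun j hj => hex j (Finset.mem_filter.mp hj).2
  · simp [hik]

lemma col_sum_eq (f : Fin n → Fin n → ℕ) (j k : Fin n) (h1 : ∑ i, f i j ≤ 1) :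
    (∑ i, if i ≤ k ∧ k ≤ j then f i j else 0)
      = if k ≤ j ∧ ∃ i, i ≤ k ∧ f i j ≠ 0 then 1 else 0 := by
  classical
  by_cases hkj : k ≤ j
  · have hsum : (∑ i, if i ≤ k ∧ k ≤ j then f i j else 0)
        = ∑ i ∈ Finset.univ.filter (fun i => i ≤ k), f i j := by
      rw [Finset.sum_filter]
      exact Finset.sum_congr rfl fun i _ => by simp [hkj]
    rw [hsum]
    by_cases hex : ∃ i, i ≤ k ∧ f i j ≠ 0
    · rw [if_pos ⟨hkj, hex⟩]
      obtain ⟨i0, hki0, hf0⟩ := hex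
      have hle : (∑ i ∈ Finset.univ.filter (fun i => i ≤ k), f i j) ≤ 1 :=
        le_trans (Finset.sum_le_sum_of_subset (Finset.filter_subset _ _)) h1
      have hge : 1 ≤ ∑ i ∈ Finset.univ.filter (fun i => i ≤ k), f i j := by
        have h3 : f i0 j ≤ ∑ i ∈ Finset.univ.filter (fun i => i ≤ k), f i j := by
          simpa using Finset.single_le_sum (f := fun i => f i j)
            (fun i _ => Nat.zero_le _)
            (by simp [hki0] : i0 ∈ Finset.univ.filter (fun i => i ≤ k))
        omega
      omega
    · rw [if_neg (fun h => hex h.2)]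
      push_neg at hex
      exact Finset.sum_eq_zero fun i hi => hex i (Finset.mem_filter.mp hi).2
  · simp [hkj]

lemma covr_eq (f : Fin n → Fin n → ℕ) (k : Fin n) (h1 : ∀ i, ∑ j, f i j ≤ 1) :
    (∑ i, ∑ j, if i ≤ k ∧ k ≤ j then f i j else 0)
      = (Finset.univ.filter fun i : Fin n => i ≤ k ∧ ∃ j, k ≤ j ∧ f i j ≠ 0).card := by
  rw [Finset.card_filter]
  exact Finset.sum_congr rfl fun i _ => row_sum_eq f i k (h1 i)

lemma covm_eq (f : Fin n → Fin n → ℕ) (k : Fin n) (h1 : ∀ j, ∑ i, f i j ≤ 1) :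
    (∑ i, ∑ j, if i ≤ k ∧ k ≤ j then f i j else 0)
      = (Finset.univ.filter fun j : Fin n => k ≤ j ∧ ∃ i, i ≤ k ∧ f i j ≠ 0).card := by
  rw [Finset.sum_comm, Finset.card_filter]
  exact Finset.sum_congr rfl fun j _ => col_sum_eq f j k (h1 j)

lemma card_split (k : Fin n) (Q : Fin (n+1) → Prop) [DecidablePred Q] :
    (Finset.univ.filter Q).card
      = (Finset.univ.filter fun i : Fin n => i ≤ k ∧ Q i.castSucc).card
        + (Finset.univ.filter fun j : Fin n => k ≤ j ∧ Q j.succ).card := by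
  classical
  have hn : 0 < n := k.pos
  have hsplit := Finset.card_filter_add_card_filter_not
    (s := Finset.univ.filter Q) (p := fun e => (e : ℕ) ≤ (k : ℕ))
  rw [Finset.filter_filter, Finset.filter_filter] at hsplit
  rw [← hsplit]
  congr 1
  · refine Finset.card_nbij' (fun e => (⟨min (e : ℕ) (n-1), by omega⟩ : Fin n))
      (fun i => i.castSucc) ?_ ?_ ?_ ?_
    · intro e he
      simp only [Finset.mem_filter, Finset.mem_univ, true_and, Finset.mem_coe] at he ⊢
      have hek : (e : ℕ) ≤ (k : ℕ) := he.2
      have hkb : (k : ℕ) ≤ n - 1 := by have := k.isLt; omega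
      have hmin : min (e : ℕ) (n-1) = (e : ℕ) := by omega
      constructor
      · exact Fin.le_def.mpr (by simp [hmin]; omega)
      · have : (⟨min (e : ℕ) (n-1), by omega⟩ : Fin n).castSucc = e := Fin.ext (by simp [hmin])
        rw [this]; exact he.1
    · intro i hi
      simp only [Finset.mem_filter, Finset.mem_univ, true_and, Finset.mem_coe] at hi ⊢
      exact ⟨hi.2, by simpa using Fin.le_def.mp hi.1⟩
    · intro e he
      simp only [Finset.mem_coe, Finset.mem_filter, Finset.mem_univ, true_and] at he
      apply Fin.ext
      simp
      omega
    · intro i hi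
      simp only [Finset.mem_coe, Finset.mem_filter, Finset.mem_univ, true_and] at hi
      apply Fin.ext
      have := Fin.le_def.mp hi.1
      have := i.isLt
      simp
      omega
  · refine Finset.card_nbij' (fun e => (⟨(e : ℕ) - 1, by omega⟩ : Fin n))
      (fun j => j.succ) ?_ ?_ ?_ ?_
    · intro e he
      simp only [Finset.mem_filter, Finset.mem_univ, true_and, not_le,
        Finset.mem_coe] at he ⊢
      have hek : (k : ℕ) < (e : ℕ) := he.2
      constructor
      · exact Fin.le_def.mpr (by simp; omega)
      · have : (⟨(e : ℕ) - 1, by omega⟩ : Fin n).succ = e := Fin.ext (by simp; omega)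
        rw [this]; exact he.1
    · intro j hj
      simp only [Finset.mem_filter, Finset.mem_univ, true_and, not_le, Finset.mem_coe] at hj ⊢
      refine ⟨hj.2, ?_⟩
      have := Fin.le_def.mp hj.1
      simp
      omega
    · intro e he
      simp only [Finset.mem_coe, Finset.mem_filter, Finset.mem_univ, true_and, not_le] at he
      apply Fin.ext
      simp
      omega
    · intro j hj
      apply Fin.ext
      simp

lemma card_le_filter (k : Fin n) :
    (Finset.univ.filter fun i : Fin n => i ≤ k).card = (k : ℕ) + 1 := by
  have : (Finset.univ.filter fun i : Fin n => i ≤ k) = Finset.Iic k := by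
    ext i; simp
  rw [this, Fin.card_Iic]

lemma card_split_le (k : Fin n) (A : Fin n → Prop) [DecidablePred A] :
    (Finset.univ.filter fun i : Fin n => i ≤ k ∧ A i).card
      + (Finset.univ.filter fun i : Fin n => i ≤ k ∧ ¬ A i).card = (k : ℕ) + 1 := by
  classical
  have hsplit := Finset.card_filter_add_card_filter_not
    (s := Finset.univ.filter fun i : Fin n => i ≤ k) (p := A)
  rw [Finset.filter_filter, Finset.filter_filter, card_le_filter] at hsplit
  convert hsplit using 3

end Generic


section Forward

variable {S : Fin n → Finset (Fin (n+1))}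

lemma rmat_row_le (S : Fin n → Finset (Fin (n+1))) (i : Fin n) :
    ∑ j, rmat S i j ≤ 1 := by
  have h : ∑ j, rmat S i j = (Finset.univ.filter fun j => rcond S i j).card := by
    rw [Finset.card_filter]
    exact Finset.sum_congr rfl fun _ _ => rfl
  rw [h]
  refine Finset.card_le_one.mpr ?_
  intro a ha b hb
  exact rcond_unique (Finset.mem_filter.mp ha).2 (Finset.mem_filter.mp hb).2

lemma mmat_col_le (S : Fin n → Finset (Fin (n+1))) (j : Fin n) :
    ∑ i, mmat S i j ≤ 1 := by
  have h : ∑ i, mmat S i j = (Finset.univ.filter fun i => mcond S i j).card := by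
    rw [Finset.card_filter]
    exact Finset.sum_congr rfl fun _ _ => rfl
  rw [h]
  refine Finset.card_le_one.mpr ?_
  intro a ha b hb
  exact mcond_unique (Finset.mem_filter.mp ha).2 (Finset.mem_filter.mp hb).2

lemma rmat_tri {i j : Fin n} (hij : j < i) : rmat S i j = 0 :=
  if_neg fun h => absurd h.1 (not_le.mpr hij)

lemma mmat_tri {i j : Fin n} (hij : j < i) : mmat S i j = 0 :=
  if_neg fun h => absurd h.1 (not_le.mpr hij)

lemma cov_forward
    (h1 : ∀ i : Fin n, (S i).card = (i : ℕ) + 1)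
    (h2 : ∀ i : Fin n, ∀ h : (i : ℕ) + 1 < n,
      S i ⊆ S ⟨(i : ℕ) + 1, h⟩ ∪ {⟨(i : ℕ) + 1, by omega⟩})
    (k : Fin n) :
    (∑ i, ∑ j, if i ≤ k ∧ k ≤ j then rmat S i j else 0)
      = (∑ i, ∑ j, if i ≤ k ∧ k ≤ j then mmat S i j else 0) := by
  classical
  rw [covr_eq _ _ (rmat_row_le S), covm_eq _ _ (mmat_col_le S)]
  have hr : (Finset.univ.filter fun i : Fin n => i ≤ k ∧ ∃ j, k ≤ j ∧ rmat S i j ≠ 0)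
      = Finset.univ.filter fun i : Fin n => i ≤ k ∧ i.castSucc ∉ S k := by
    apply Finset.filter_congr
    intro i _
    refine and_congr_right fun hik => ?_
    rw [← r_iff h2 hik]
    refine exists_congr fun j => and_congr_right fun _ => ?_
    simp only [rmat, ne_eq, ite_eq_right_iff, Classical.not_imp]
    constructor
    · exact fun h => h.1
    · exact fun h => ⟨h, one_ne_zero⟩
  have hm : (Finset.univ.filter fun j : Fin n => k ≤ j ∧ ∃ i, i ≤ k ∧ mmat S i j ≠ 0)
      = Finset.univ.filter fun j : Fin n => k ≤ j ∧ j.succ ∈ S k := by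
    apply Finset.filter_congr
    intro j _
    refine and_congr_right fun hkj => ?_
    rw [← m_iff h2 hkj]
    refine exists_congr fun i => and_congr_right fun _ => ?_
    simp only [mmat, ne_eq, ite_eq_right_iff, Classical.not_imp]
    constructor
    · exact fun h => h.1
    · exact fun h => ⟨h, one_ne_zero⟩
  rw [hr, hm]
  have hs := card_split k (fun e => e ∈ S k)
  have h0 : Finset.univ.filter (fun e => e ∈ S k) = S k := by ext e; simp
  rw [h0, h1 k] at hs
  have hle := card_split_le k (fun i : Fin n => i.castSucc ∈ S k)
  omega

end Forward

section Backward

variable {r m : Fin n → Fin n → ℕ}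

lemma mem_toS_lo {k : Fin n} {e : Fin (n+1)} (he : (e : ℕ) ≤ (k : ℕ)) :
    e ∈ toS r m k ↔ ∀ i j : Fin n, (i : ℕ) = (e : ℕ) → k ≤ j → r i j = 0 := by
  simp only [toS, Finset.mem_filter, Finset.mem_univ, true_and]
  constructor
  · rintro (⟨_, h⟩ | ⟨hk, _⟩)
    · exact h
    · omega
  · intro h
    exact Or.inl ⟨he, h⟩

lemma mem_toS_hi {k : Fin n} {e : Fin (n+1)} (he : (k : ℕ) < (e : ℕ)) :
    e ∈ toS r m k ↔ ∃ i j : Fin n, (j : ℕ) + 1 = (e : ℕ) ∧ i ≤ k ∧ m i j ≠ 0 := by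
  simp only [toS, Finset.mem_filter, Finset.mem_univ, true_and]
  constructor
  · rintro (⟨hk, _⟩ | ⟨_, h⟩)
    · omega
    · exact h
  · intro h
    exact Or.inr ⟨he, h⟩

lemma mem_toS_lo' {i k : Fin n} (hik : i ≤ k) :
    i.castSucc ∈ toS r m k ↔ ∀ j, k ≤ j → r i j = 0 := by
  rw [mem_toS_lo (by simpa using Fin.le_def.mp hik)]
  constructor
  · intro h j hkj
    exact h i j (by simp) hkj
  · intro h i' j hi' hkj
    have : i' = i := Fin.ext (by simpa using hi')
    rw [this]
    exact h j hkj

lemma mem_toS_hi' {j k : Fin n} (hkj : k ≤ j) :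
    j.succ ∈ toS r m k ↔ ∃ i, i ≤ k ∧ m i j ≠ 0 := by
  rw [mem_toS_hi (by simp; have := Fin.le_def.mp hkj; omega)]
  constructor
  · rintro ⟨i, j', hj', hik, hm⟩
    have : j' = j := Fin.ext (by simp at hj'; omega)
    rw [this] at hm
    exact ⟨i, hik, hm⟩
  · rintro ⟨i, hik, hm⟩
    exact ⟨i, j, by simp, hik, hm⟩

lemma toS_card
    (hcr : ∀ k : Fin n, ∑ j, r k j ≤ 1)
    (hcm : ∀ k : Fin n, ∑ i, m i k ≤ 1)
    (hcov : ∀ k : Fin n,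
      (∑ i, ∑ j, if i ≤ k ∧ k ≤ j then r i j else 0)
        = (∑ i, ∑ j, if i ≤ k ∧ k ≤ j then m i j else 0))
    (k : Fin n) : (toS r m k).card = (k : ℕ) + 1 := by
  classical
  have hs := card_split k (fun e => e ∈ toS r m k)
  have h0 : Finset.univ.filter (fun e => e ∈ toS r m k) = toS r m k := by ext e; simp
  rw [h0] at hs
  have e1 : (Finset.univ.filter fun i : Fin n => i ≤ k ∧ i.castSucc ∈ toS r m k)
      = Finset.univ.filter fun i : Fin n => i ≤ k ∧ ¬ ∃ j, k ≤ j ∧ r i j ≠ 0 := by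
    apply Finset.filter_congr
    intro i _
    refine and_congr_right fun hik => ?_
    rw [mem_toS_lo' hik]
    push_neg
    simp
  have e2 : (Finset.univ.filter fun j : Fin n => k ≤ j ∧ j.succ ∈ toS r m k)
      = Finset.univ.filter fun j : Fin n => k ≤ j ∧ ∃ i, i ≤ k ∧ m i j ≠ 0 := by
    apply Finset.filter_congr
    intro j _
    exact and_congr_right fun hkj => mem_toS_hi' hkj
  rw [e1, e2] at hs
  have hle := card_split_le k (fun i : Fin n => ∃ j, k ≤ j ∧ r i j ≠ 0)
  have hcovr := covr_eq r k hcr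
  have hcovm := covm_eq m k hcm
  have := hcov k
  omega

lemma toS_chain
    (k : Fin n) (h : (k : ℕ) + 1 < n) :
    toS r m k ⊆ toS r m ⟨(k : ℕ) + 1, h⟩ ∪ {⟨(k : ℕ) + 1, by omega⟩} := by
  intro e he
  rcases eq_or_ne ((e : ℕ)) ((k : ℕ) + 1) with hv | hv
  · exact Finset.mem_union_right _ (Finset.mem_singleton.mpr (Fin.ext (by simpa using hv)))
  refine Finset.mem_union_left _ ?_
  by_cases he' : (e : ℕ) ≤ (k : ℕ)
  · rw [mem_toS_lo he'] at he
    rw [mem_toS_lo (by simp; omega)]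
    intro i j hiv hkj
    refine he i j hiv (Fin.le_def.mpr ?_)
    have := Fin.le_def.mp hkj
    simp at this
    omega
  · rw [mem_toS_hi (by omega)] at he
    rw [mem_toS_hi (by simp; omega)]
    obtain ⟨i, j, hj, hik, hm⟩ := he
    refine ⟨i, j, hj, Fin.le_def.mpr ?_, hm⟩
    have := Fin.le_def.mp hik
    simp
    omega

end Backward

section Inverses

variable {S : Fin n → Finset (Fin (n+1))} {r m : Fin n → Fin n → ℕ}

lemma toS_rmat_mmat
    (h2 : ∀ i : Fin n, ∀ h : (i : ℕ) + 1 < n,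
      S i ⊆ S ⟨(i : ℕ) + 1, h⟩ ∪ {⟨(i : ℕ) + 1, by omega⟩}) :
    toS (rmat S) (mmat S) = S := by
  funext k
  ext e
  by_cases he : (e : ℕ) ≤ (k : ℕ)
  · rw [mem_toS_lo he]
    have hi0lt : (e : ℕ) < n := lt_of_le_of_lt he k.isLt
    set i0 : Fin n := ⟨(e : ℕ), hi0lt⟩ with hi0def
    have hi0 : i0.castSucc = e := Fin.ext (by simp [hi0def])
    have hi0k : i0 ≤ k := Fin.le_def.mpr (by simpa [hi0def] using he)
    constructor
    · intro h
      by_contra hne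
      obtain ⟨j, hkj, hc⟩ := rcond_exists h2 hi0k (hi0 ▸ hne)
      have := h i0 j rfl hkj
      simp [rmat, hc] at this
    · intro hmem i j hiv hkj
      refine if_neg fun hc => ?_
      have hii : i = i0 := Fin.ext (by simpa [hi0def] using hiv)
      exact hc.2.1 k (hii ▸ hi0k) hkj (by rw [hii, hi0]; exact hmem)
  · have hke : (k : ℕ) < (e : ℕ) := not_le.mp he
    rw [mem_toS_hi hke]
    have hj0lt : (e : ℕ) - 1 < n := by have := k.isLt; omega
    set j0 : Fin n := ⟨(e : ℕ) - 1, hj0lt⟩ with hj0def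
    have hj0 : j0.succ = e := Fin.ext (by simp [hj0def]; omega)
    have hkj0 : k ≤ j0 := Fin.le_def.mpr (by simp [hj0def]; omega)
    constructor
    · rintro ⟨i, j, hjv, hik, hm⟩
      have hjj : j = j0 := Fin.ext (by simp [hj0def]; omega)
      rw [hjj] at hm
      have hc : mcond S i j0 := by
        by_contra hnc
        simp [mmat, hnc] at hm
      exact hj0 ▸ hc.2.1 k hik hkj0
    · intro hmem
      obtain ⟨i, hik, hc⟩ := mcond_exists h2 hkj0 (hj0.symm ▸ hmem)
      exact ⟨i, j0, by simp [hj0def]; omega, hik, by simp [mmat, hc]⟩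

lemma rmat_toS
    (hr0 : ∀ i j : Fin n, j < i → r i j = 0)
    (hrow : ∀ k : Fin n, ∑ j, r k j ≤ 1)
    (i j : Fin n) :
    rmat (toS r m) i j = r i j := by
  classical
  by_cases hz : ∀ j', r i j' = 0
  · have hnc : ¬ rcond (toS r m) i j := by
      intro hc
      have hmem : i.castSucc ∈ toS r m i :=
        (mem_toS_lo' (le_refl i)).mpr fun j' _ => hz j'
      exact hc.2.1 i (le_refl i) hc.1 hmem
    simp [rmat, hnc, hz j]
  · push_neg at hz
    obtain ⟨j0, hj0⟩ := hz
    have hone : 1 ≤ r i j0 := Nat.one_le_iff_ne_zero.mpr hj0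
    have hsum : r i j0 ≤ ∑ j', r i j' :=
      Finset.single_le_sum (f := fun j' => r i j') (fun _ _ => Nat.zero_le _) (Finset.mem_univ j0)
    have hr1 : r i j0 = 1 := le_antisymm (le_trans hsum (hrow i)) hone
    have huniq : ∀ j', r i j' ≠ 0 → j' = j0 := by
      intro j' hj'
      by_contra hne
      have h1' : 1 ≤ r i j' := Nat.one_le_iff_ne_zero.mpr hj'
      have herase : r i j' ≤ ∑ x ∈ Finset.univ.erase j0, r i x :=
        Finset.single_le_sum (f := fun j' => r i j') (fun _ _ => Nat.zero_le _)
          (Finset.mem_erase.mpr ⟨hne, Finset.mem_univ j'⟩)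
      have hadd : r i j0 + ∑ x ∈ Finset.univ.erase j0, r i x = ∑ x, r i x :=
        Finset.add_sum_erase _ _ (Finset.mem_univ j0)
      have := hrow i
      omega
    have hij0 : i ≤ j0 := not_lt.mp fun h => hj0 (hr0 i j0 h)
    have hmemlow : ∀ k, i ≤ k → k ≤ j0 → i.castSucc ∉ toS r m k := by
      intro k hik hkj hmem
      exact hj0 ((mem_toS_lo' hik).mp hmem j0 hkj)
    have hmemhigh : ∀ k : Fin n, (j0 : ℕ) < (k : ℕ) → i.castSucc ∈ toS r m k := by
      intro k hk
      refine (mem_toS_lo' (Fin.le_def.mpr (by have := Fin.le_def.mp hij0; omega))).mpr ?_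
      intro j' hkj'
      by_contra hne
      have hv := congrArg Fin.val (huniq j' hne)
      have := Fin.le_def.mp hkj'
      omega
    by_cases hjj : j = j0
    · subst hjj
      have hc : rcond (toS r m) i j := by
        refine ⟨hij0, hmemlow, ?_⟩
        intro k' hk'
        exact hmemhigh k' (by omega)
      simp [rmat, hc, hr1]
    · have hrz : r i j = 0 := by
        by_contra hne
        exact hjj (huniq j hne)
      have hnc : ¬ rcond (toS r m) i j := by
        intro hc
        have hij : i ≤ j := hc.1
        rcases lt_or_gt_of_ne (fun h => hjj h) with hlt | hgt
        · have hb : (j : ℕ) + 1 < n := by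
            have := Fin.lt_def.mp hlt; have := j0.isLt; omega
          have hin := hc.2.2 ⟨(j : ℕ) + 1, hb⟩ rfl
          refine hmemlow ⟨(j : ℕ) + 1, hb⟩ ?_ ?_ hin
          · exact Fin.le_def.mpr (by have := Fin.le_def.mp hij; simp; omega)
          · exact Fin.le_def.mpr (by have := Fin.lt_def.mp hlt; simp; omega)
        · have hb : (j0 : ℕ) + 1 < n := by
            have := Fin.lt_def.mp hgt; have := j.isLt; omega
          have hnin := hc.2.1 ⟨(j0 : ℕ) + 1, hb⟩
            (Fin.le_def.mpr (by have := Fin.le_def.mp hij0; simp; omega))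
            (Fin.le_def.mpr (by have := Fin.lt_def.mp hgt; simp; omega))
          exact hnin (hmemhigh ⟨(j0 : ℕ) + 1, hb⟩ (by simp))
      simp [rmat, hnc, hrz]

lemma mmat_toS
    (hm0 : ∀ i j : Fin n, j < i → m i j = 0)
    (hcol : ∀ k : Fin n, ∑ i, m i k ≤ 1)
    (i j : Fin n) :
    mmat (toS r m) i j = m i j := by
  classical
  by_cases hz : ∀ i', m i' j = 0
  · have hnc : ¬ mcond (toS r m) i j := by
      intro hc
      have hmem : j.succ ∈ toS r m j := hc.2.1 j hc.1 (le_refl j)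
      obtain ⟨i', _, hne⟩ := (mem_toS_hi' (le_refl j)).mp hmem
      exact hne (hz i')
    simp [mmat, hnc, hz i]
  · push_neg at hz
    obtain ⟨i0, hi0⟩ := hz
    have hone : 1 ≤ m i0 j := Nat.one_le_iff_ne_zero.mpr hi0
    have hsum : m i0 j ≤ ∑ i', m i' j :=
      Finset.single_le_sum (f := fun i' => m i' j) (fun _ _ => Nat.zero_le _) (Finset.mem_univ i0)
    have hm1 : m i0 j = 1 := le_antisymm (le_trans hsum (hcol j)) hone
    have huniq : ∀ i', m i' j ≠ 0 → i' = i0 := by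
      intro i' hi'
      by_contra hne
      have h1' : 1 ≤ m i' j := Nat.one_le_iff_ne_zero.mpr hi'
      have herase : m i' j ≤ ∑ x ∈ Finset.univ.erase i0, m x j :=
        Finset.single_le_sum (f := fun i' => m i' j) (fun _ _ => Nat.zero_le _)
          (Finset.mem_erase.mpr ⟨hne, Finset.mem_univ i'⟩)
      have hadd : m i0 j + ∑ x ∈ Finset.univ.erase i0, m x j = ∑ x, m x j :=
        Finset.add_sum_erase _ (fun x => m x j) (Finset.mem_univ i0)
      have := hcol j
      omega
    have hi0j : i0 ≤ j := not_lt.mp fun h => hi0 (hm0 i0 j h)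
    have hmemge : ∀ k, i0 ≤ k → k ≤ j → j.succ ∈ toS r m k := by
      intro k hik hkj
      exact (mem_toS_hi' hkj).mpr ⟨i0, hik, hi0⟩
    have hmemlt : ∀ k : Fin n, (k : ℕ) < (i0 : ℕ) → k ≤ j → j.succ ∉ toS r m k := by
      intro k hk hkj hmem
      obtain ⟨i', hik, hne⟩ := (mem_toS_hi' hkj).mp hmem
      have hv := congrArg Fin.val (huniq i' hne)
      have := Fin.le_def.mp hik
      omega
    by_cases hii : i = i0
    · subst hii
      have hc : mcond (toS r m) i j := by
        refine ⟨hi0j, hmemge, ?_⟩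
        intro k' hk'
        refine hmemlt k' (by omega) ?_
        exact Fin.le_def.mpr (by have := Fin.le_def.mp hi0j; omega)
      simp [mmat, hc, hm1]
    · have hmz : m i j = 0 := by
        by_contra hne
        exact hii (huniq i hne)
      have hnc : ¬ mcond (toS r m) i j := by
        intro hc
        have hij : i ≤ j := hc.1
        rcases lt_or_gt_of_ne (fun h => hii h) with hlt | hgt
        · have hin := hc.2.1 i (le_refl i) hij
          exact hmemlt i (Fin.lt_def.mp hlt) hij hin
        · have hb : (i : ℕ) - 1 < n := by have := i.isLt; omega
          have hipos : 0 < (i : ℕ) := by have := Fin.lt_def.mp hgt; omega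
          have hnin := hc.2.2 ⟨(i : ℕ) - 1, hb⟩ (by simp; omega)
          refine hnin (hmemge ⟨(i : ℕ) - 1, hb⟩ ?_ ?_)
          · exact Fin.le_def.mpr (by have := Fin.lt_def.mp hgt; simp; omega)
          · exact Fin.le_def.mpr (by have := Fin.le_def.mp hij; simp; omega)
      simp [mmat, hnc, hmz]

end Inverses

end GenocchiAux

theorem genocchi_eq_card_pairs (n : ℕ) :
    genocchi (n + 1) =
      Nat.card {p : (Fin n → Fin n → ℕ) × (Fin n → Fin n → ℕ) //
        (∀ i j : Fin n, j < i → p.1 i j = 0) ∧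
        (∀ i j : Fin n, j < i → p.2 i j = 0) ∧
        (∀ k : Fin n, ∑ j : Fin n, p.1 k j ≤ 1) ∧
        (∀ k : Fin n, ∑ i : Fin n, p.2 i k ≤ 1) ∧
        (∀ k : Fin n,
          (∑ i : Fin n, ∑ j : Fin n, if i ≤ k ∧ k ≤ j then p.1 i j else 0) =
          (∑ i : Fin n, ∑ j : Fin n, if i ≤ k ∧ k ≤ j then p.2 i j else 0))} := by
  unfold genocchi
  refine Nat.card_congr ?_
  refine
    ⟨fun S =>
      ⟨(GenocchiAux.rmat S.1, GenocchiAux.mmat S.1),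
        fun _ _ hij => GenocchiAux.rmat_tri hij,
        fun _ _ hij => GenocchiAux.mmat_tri hij,
        fun k => GenocchiAux.rmat_row_le S.1 k,
        fun k => GenocchiAux.mmat_col_le S.1 k,
        fun k => GenocchiAux.cov_forward S.2.1 S.2.2 k⟩,
      fun p =>
      ⟨GenocchiAux.toS p.1.1 p.1.2,
        fun k => GenocchiAux.toS_card p.2.2.2.1 p.2.2.2.2.1 p.2.2.2.2.2 k,
        fun k h => GenocchiAux.toS_chain k h⟩,
      fun S => Subtype.ext (GenocchiAux.toS_rmat_mmat S.2.2),
      fun p => by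
        apply Subtype.ext
        have h1 : GenocchiAux.rmat (GenocchiAux.toS p.1.1 p.1.2) = p.1.1 := by
          funext i j
          exact GenocchiAux.rmat_toS p.2.1 p.2.2.2.1 i j
        have h2 : GenocchiAux.mmat (GenocchiAux.toS p.1.1 p.1.2) = p.1.2 := by
          funext i j
          exact GenocchiAux.mmat_toS p.2.2.1 p.2.2.2.2.1 i j
        show (GenocchiAux.rmat (GenocchiAux.toS p.1.1 p.1.2),
          GenocchiAux.mmat (GenocchiAux.toS p.1.1 p.1.2)) = p.1
        rw [h1, h2]⟩
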